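/- Let $R=k[x,y]$ be a polynomial ring over a field $k$ and $M\subseteq R^2$ the submodule generated by $(x,0)$, $(y,x)$, $(0,y)$. For every integer $n\ge 2$, $x^nM\cap y^nM=x^ny^nR^2$, and hence $\frac{M}{x^n}\cap\frac{M}{y^n}=R^2$. -/

import Mathlib

set_option maxHeartbeats 1000000

open Pointwise MvPolynomial

private lemma mem_ps {R M : Type*} [CommRing R] [AddCommGroup M] [Module R M]
    (a : R) (S : Submodule R M) (v : M) : v ∈ a • S ↔ ∃ s ∈ S, a • s = v := by
  rw [← SetLike.mem_coe, Submodule.coe_pointwise_smul]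
  exact Set.mem_smul_set

private lemma primeX1 (k : Type*) [Field k] : Prime (X 1 : MvPolynomial (Fin 2) k) := by
  have h0 : Prime (X 0 : MvPolynomial (Fin 2) k) := by
    rw [← MulEquiv.prime_iff (finSuccEquiv k 1).toMulEquiv]
    have : (finSuccEquiv k 1).toMulEquiv (X 0) = Polynomial.X := finSuccEquiv_X_zero
    rw [this]
    exact Polynomial.prime_X
  rw [← MulEquiv.prime_iff (renameEquiv k (Equiv.swap (0 : Fin 2) 1)).toMulEquiv]
  have : (renameEquiv k (Equiv.swap (0 : Fin 2) 1)).toMulEquiv (X 1) = X 0 := by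
    show rename _ (X 1) = _
    simp
  rw [this]
  exact h0

/-- for `R = k[x,y]` and `M = ⟨(x,0),(y,x),(0,y)⟩ ⊆ R²` and every
`n ≥ 2`, `xⁿM ∩ yⁿM = xⁿyⁿR²`, and hence `M/xⁿ ∩ M/yⁿ = R²` inside `Q(R)²`,
where `M/a` is realized as the preimage of the image `M'` of `M` in `Q(R)²`
under multiplication by `a`, and `R²` as the image of `φ`. -/
theorem stmt4 (k : Type*) [Field k]
    (x y : MvPolynomial (Fin 2) k) (hx : x = X 0) (hy : y = X 1)
    (M : Submodule (MvPolynomial (Fin 2) k)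
      (MvPolynomial (Fin 2) k × MvPolynomial (Fin 2) k))
    (hM : M = Submodule.span _ {(x, 0), (y, x), (0, y)})
    (φ : MvPolynomial (Fin 2) k × MvPolynomial (Fin 2) k →ₗ[MvPolynomial (Fin 2) k]
      FractionRing (MvPolynomial (Fin 2) k) × FractionRing (MvPolynomial (Fin 2) k))
    (hφ : φ = (Algebra.linearMap (MvPolynomial (Fin 2) k) (FractionRing (MvPolynomial (Fin 2) k))).prodMap
      (Algebra.linearMap (MvPolynomial (Fin 2) k) (FractionRing (MvPolynomial (Fin 2) k)))) :
    ∀ n : ℕ, 2 ≤ n →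
      x ^ n • M ⊓ y ^ n • M =
          (x ^ n * y ^ n) • (⊤ : Submodule (MvPolynomial (Fin 2) k)
            (MvPolynomial (Fin 2) k × MvPolynomial (Fin 2) k)) ∧
        (M.map φ).comap (LinearMap.lsmul _ _ (x ^ n)) ⊓
            (M.map φ).comap (LinearMap.lsmul _ _ (y ^ n)) =
          LinearMap.range φ := by
  intro n hn
  obtain ⟨m, rfl⟩ : ∃ m, n = m + 2 := ⟨n - 2, by omega⟩
  -- basic memberships
  have h1 : (x, (0 : MvPolynomial (Fin 2) k)) ∈ M := hM ▸ Submodule.subset_span (by simp)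
  have h2 : (y, x) ∈ M := hM ▸ Submodule.subset_span (by simp)
  have h3 : ((0 : MvPolynomial (Fin 2) k), y) ∈ M := hM ▸ Submodule.subset_span (by simp)
  have hx0 : ((x ^ (m+2)), (0 : MvPolynomial (Fin 2) k)) ∈ M := by
    have : ((x ^ (m+2)), (0 : MvPolynomial (Fin 2) k)) = (x^(m+1)) • (x, (0 : MvPolynomial (Fin 2) k)) := by
      simp [Prod.ext_iff, smul_eq_mul]; ring
    rw [this]; exact M.smul_mem _ h1
  have h0y : ((0 : MvPolynomial (Fin 2) k), (y ^ (m+2))) ∈ M := by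
    have : ((0 : MvPolynomial (Fin 2) k), (y ^ (m+2))) = (y^(m+1)) • ((0 : MvPolynomial (Fin 2) k), y) := by
      simp [Prod.ext_iff, smul_eq_mul]; ring
    rw [this]; exact M.smul_mem _ h3
  have hy0 : ((y ^ (m+2)), (0 : MvPolynomial (Fin 2) k)) ∈ M := by
    have : ((y ^ (m+2)), (0 : MvPolynomial (Fin 2) k)) =
        (y^(m+1)) • (y, x) - (x * y^m) • ((0 : MvPolynomial (Fin 2) k), y) := by
      simp [Prod.ext_iff, smul_eq_mul]; constructor <;> ring
    rw [this]; exact sub_mem (M.smul_mem _ h2) (M.smul_mem _ h3)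
  have h0x : ((0 : MvPolynomial (Fin 2) k), (x ^ (m+2))) ∈ M := by
    have : ((0 : MvPolynomial (Fin 2) k), (x ^ (m+2))) =
        (x^(m+1)) • (y, x) - (y * x^m) • (x, (0 : MvPolynomial (Fin 2) k)) := by
      simp [Prod.ext_iff, smul_eq_mul]; constructor <;> ring
    rw [this]; exact sub_mem (M.smul_mem _ h2) (M.smul_mem _ h1)
  have hXtop : ∀ v : MvPolynomial (Fin 2) k × MvPolynomial (Fin 2) k, (x^(m+2)) • v ∈ M := by
    intro v
    have : (x^(m+2)) • v = v.1 • ((x ^ (m+2)), (0 : MvPolynomial (Fin 2) k))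
        + v.2 • ((0 : MvPolynomial (Fin 2) k), (x ^ (m+2))) := by
      simp [Prod.ext_iff, smul_eq_mul]; constructor <;> ring
    rw [this]; exact add_mem (M.smul_mem _ hx0) (M.smul_mem _ h0x)
  have hYtop : ∀ v : MvPolynomial (Fin 2) k × MvPolynomial (Fin 2) k, (y^(m+2)) • v ∈ M := by
    intro v
    have : (y^(m+2)) • v = v.1 • ((y ^ (m+2)), (0 : MvPolynomial (Fin 2) k))
        + v.2 • ((0 : MvPolynomial (Fin 2) k), (y ^ (m+2))) := by
      simp [Prod.ext_iff, smul_eq_mul]; constructor <;> ring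
    rw [this]; exact add_mem (M.smul_mem _ hy0) (M.smul_mem _ h0y)
  -- primality / non-divisibility facts
  have hyprime : Prime y := hy ▸ primeX1 k
  have hxne : x ≠ 0 := by rw [hx]; exact MvPolynomial.X_ne_zero 0
  have hyne : y ≠ 0 := by rw [hy]; exact MvPolynomial.X_ne_zero 1
  have hndvd : ¬ y ∣ x := by
    rw [hx, hy, X_dvd_X]
    decide
  -- Part 1
  have part1 : x ^ (m+2) • M ⊓ y ^ (m+2) • M =
      (x ^ (m+2) * y ^ (m+2)) • (⊤ : Submodule (MvPolynomial (Fin 2) k)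
        (MvPolynomial (Fin 2) k × MvPolynomial (Fin 2) k)) := by
    apply le_antisymm
    · intro v hv
      rw [Submodule.mem_inf, mem_ps, mem_ps] at hv
      obtain ⟨⟨a, _, rfl⟩, ⟨b, _, heq⟩⟩ := hv
      have hnd : ¬ y ∣ x ^ (m+2) := fun h => hndvd (hyprime.dvd_of_dvd_pow h)
      have hd1 : y^(m+2) ∣ a.1 := by
        refine hyprime.pow_dvd_of_dvd_mul_left (m+2) hnd ⟨b.1, ?_⟩
        have := congrArg Prod.fst heq
        simp only [Prod.smul_fst, smul_eq_mul] at this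
        exact this.symm
      have hd2 : y^(m+2) ∣ a.2 := by
        refine hyprime.pow_dvd_of_dvd_mul_left (m+2) hnd ⟨b.2, ?_⟩
        have := congrArg Prod.snd heq
        simp only [Prod.smul_snd, smul_eq_mul] at this
        exact this.symm
      obtain ⟨c1, hc1⟩ := hd1
      obtain ⟨c2, hc2⟩ := hd2
      rw [mem_ps]
      refine ⟨(c1, c2), Submodule.mem_top, ?_⟩
      simp only [Prod.ext_iff, Prod.smul_fst, Prod.smul_snd, smul_eq_mul, hc1, hc2]
      constructor <;> ring
    · intro v hv
      rw [mem_ps] at hv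
      obtain ⟨r, -, rfl⟩ := hv
      rw [Submodule.mem_inf]
      constructor
      · rw [mul_smul]
        exact Submodule.smul_mem_pointwise_smul _ _ _ (hYtop r)
      · rw [mul_comm, mul_smul]
        exact Submodule.smul_mem_pointwise_smul _ _ _ (hXtop r)
  refine ⟨part1, ?_⟩
  -- Part 2
  have hφinj : Function.Injective φ := by
    rw [hφ]
    intro p q h
    simp only [LinearMap.prodMap_apply, Algebra.linearMap_apply, Prod.ext_iff] at h ⊢
    have hinj := IsFractionRing.injective (MvPolynomial (Fin 2) k)
      (FractionRing (MvPolynomial (Fin 2) k))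
    exact ⟨hinj h.1, hinj h.2⟩
  ext w
  simp only [Submodule.mem_inf, Submodule.mem_comap, LinearMap.lsmul_apply, LinearMap.mem_range]
  constructor
  · rintro ⟨hw1, hw2⟩
    obtain ⟨p, hp, hp'⟩ := hw1
    obtain ⟨q, hq, hq'⟩ := hw2
    have key : φ ((y^(m+2)) • p) = φ ((x^(m+2)) • q) := by
      rw [map_smul, map_smul, hp', hq', smul_smul, smul_smul, mul_comm]
    have hyp : (y^(m+2)) • p = (x^(m+2)) • q := hφinj key
    have hmem : (x^(m+2)) • q ∈ (x ^ (m+2) * y ^ (m+2)) • (⊤ : Submodule (MvPolynomial (Fin 2) k)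
        (MvPolynomial (Fin 2) k × MvPolynomial (Fin 2) k)) := by
      rw [← part1, Submodule.mem_inf]
      refine ⟨Submodule.smul_mem_pointwise_smul _ _ _ hq, ?_⟩
      rw [← hyp]
      exact Submodule.smul_mem_pointwise_smul _ _ _ hp
    rw [mem_ps] at hmem
    obtain ⟨r, -, hr⟩ := hmem
    have hp2 : p = (x^(m+2)) • r := by
      have : (y^(m+2)) • ((x^(m+2)) • r) = (y^(m+2)) • p := by
        rw [smul_smul, mul_comm, hr, hyp]
      exact (smul_right_injective (MvPolynomial (Fin 2) k × MvPolynomial (Fin 2) k)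
        (pow_ne_zero _ hyne) this).symm
    refine ⟨r, ?_⟩
    have : (x^(m+2)) • φ r = (x^(m+2)) • w := by
      rw [← map_smul, ← hp2, hp']
    exact smul_right_injective
      (FractionRing (MvPolynomial (Fin 2) k) × FractionRing (MvPolynomial (Fin 2) k))
      (pow_ne_zero _ hxne) this
  · rintro ⟨r, rfl⟩
    constructor
    · rw [← map_smul]; exact Submodule.mem_map_of_mem (hXtop r)
    · rw [← map_smul]; exact Submodule.mem_map_of_mem (hYtop r)
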